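/- Let K be a compact connected Lie group with closed connected subgroups G and H such that 𝔤 + 𝔥 = 𝔨 (Lie algebras). Then Ad(k)𝔤 + 𝔥 = 𝔨 for all k ∈ K. -/

import Mathlib

/-- The Lie algebra of a (matrix) subgroup `G`, as the set of matrices `X` whose whole
one-parameter group `t ↦ exp (t • X)` lies in `G`. -/
def lieAlgOf (n : ℕ) (G : Subgroup (Matrix (Fin n) (Fin n) ℝ)ˣ) :
    Set (Matrix (Fin n) (Fin n) ℝ) :=
  {X | ∀ t : ℝ, ∃ u ∈ G, (u : Matrix (Fin n) (Fin n) ℝ) = NormedSpace.exp (t • X)}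

open scoped Topology
open Filter NormedSpace

namespace Stmt18

variable {n : ℕ}

abbrev Mat (n : ℕ) := Matrix (Fin n) (Fin n) ℝ


/-- conjugation invariance of the Lie algebra -/
theorem conj_mem_lieAlgOf {P : Subgroup (Mat n)ˣ} {u : (Mat n)ˣ} (hu : u ∈ P) {X : Mat n}
    (hX : X ∈ lieAlgOf n P) : (u : Mat n) * X * ((u⁻¹ : (Mat n)ˣ) : Mat n) ∈ lieAlgOf n P := by
  intro t
  obtain ⟨w, hw, hwe⟩ := hX t
  refine ⟨u * w * u⁻¹, mul_mem (mul_mem hu hw) (inv_mem hu), ?_⟩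
  have heq : t • ((u : Mat n) * X * ((u⁻¹ : (Mat n)ˣ) : Mat n))
      = (u : Mat n) * (t • X) * ((u⁻¹ : (Mat n)ˣ) : Mat n) := by
    simp only [Matrix.smul_mul, Matrix.mul_smul]
  rw [heq, Matrix.exp_units_conj]
  simp [hwe]

section Normed

attribute [local instance] Matrix.linftyOpSemiNormedRing Matrix.linftyOpNormedRing
  Matrix.linftyOpNormedAlgebra

theorem exp_mul_exp_neg (X : Mat n) : exp X * exp (-X) = 1 := by
  erw [← NormedSpace.exp_add_of_commute (Commute.neg_right rfl), add_neg_cancel,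
    NormedSpace.exp_zero]

theorem val_inv_of_exp (u : (Mat n)ˣ) (X : Mat n) (h : (u : Mat n) = exp X) :
    ((u⁻¹ : (Mat n)ˣ) : Mat n) = exp (-X) := by
  calc ((u⁻¹ : (Mat n)ˣ) : Mat n) = ↑u⁻¹ * (exp X * exp (-X)) := by
        rw [exp_mul_exp_neg, mul_one]
    _ = ↑u⁻¹ * ↑u * exp (-X) := by rw [← h, mul_assoc]
    _ = exp (-X) := by rw [Units.inv_mul, one_mul]

theorem val_zpow_of_exp (u : (Mat n)ˣ) (X : Mat n) (h : (u : Mat n) = exp X) (m : ℤ) :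
    ((u ^ m : (Mat n)ˣ) : Mat n) = exp ((m : ℝ) • X) := by
  have hnat : ∀ (k : ℕ) (v : (Mat n)ˣ) (Y : Mat n), (v : Mat n) = exp Y →
      ((v ^ k : (Mat n)ˣ) : Mat n) = exp ((k : ℝ) • Y) := by
    intro k
    induction k with
    | zero => intro v Y hv; simp [NormedSpace.exp_zero]
    | succ k ih =>
      intro v Y hv
      have : ((v ^ (k+1) : (Mat n)ˣ) : Mat n) = ((v ^ k : (Mat n)ˣ) : Mat n) * v := by
        rw [pow_succ]; rfl
      erw [this, ih v Y hv, hv, ← NormedSpace.exp_add_of_commute (Commute.smul_left rfl _)]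
      congr 1
      push_cast
      rw [add_smul, one_smul]
  obtain ⟨k, rfl | rfl⟩ := m.eq_nat_or_neg
  · rw [zpow_natCast, hnat k u X h]; norm_num
  · rw [zpow_neg, zpow_natCast, val_inv_of_exp (u ^ k) ((k:ℝ) • X) (hnat k u X h)]
    congr 1; push_cast; rw [neg_smul]

/-- The Cartan-type small-element lemma. -/
theorem crux (K G H : Subgroup (Mat n)ˣ) (hKcompact : IsCompact (K : Set (Mat n)ˣ))
    (hsum : ∀ X ∈ lieAlgOf n K, ∃ Y ∈ lieAlgOf n G, ∃ Z ∈ lieAlgOf n H, X = Y + Z)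
    (S : Submodule ℝ (Mat n))
    (hS : Disjoint S (Submodule.span ℝ (lieAlgOf n G) ⊔ Submodule.span ℝ (lieAlgOf n H))) :
    ∃ ε > (0:ℝ), ∀ C : Mat n, C ∈ S → ‖C‖ < ε → (∃ u ∈ K, (u : Mat n) = exp C) → C = 0 := by
  by_contra hcon
  push_neg at hcon
  have hseq : ∀ k : ℕ, ∃ C : Mat n, C ∈ S ∧ ‖C‖ < 1/(k+1) ∧
      (∃ u ∈ K, (u : Mat n) = exp C) ∧ C ≠ 0 := by
    intro k
    obtain ⟨C, h1, h2, h3, h4⟩ := hcon (1/(k+1)) (by positivity)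
    exact ⟨C, h1, h2, h3, h4⟩
  choose C hCS hClt hCu hC0 using hseq
  choose u huK hue using hCu
  have hCnorm : ∀ k, (0:ℝ) < ‖C k‖ := fun k => norm_pos_iff.2 (hC0 k)
  set D : ℕ → Mat n := fun k => ‖C k‖⁻¹ • C k with hD
  have hDmem : ∀ k, D k ∈ Metric.sphere (0 : Mat n) 1 ∩ (S : Set (Mat n)) := by
    intro k
    constructor
    · simp [hD, norm_smul, abs_of_pos (inv_pos.2 (hCnorm k)),
        inv_mul_cancel₀ (hCnorm k).ne']
    · exact S.smul_mem _ (hCS k)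
  have hcpt : IsCompact (Metric.sphere (0 : Mat n) 1 ∩ (S : Set (Mat n))) :=
    (isCompact_sphere 0 1).inter_right S.closed_of_finiteDimensional
  haveI : FirstCountableTopology (Mat n) := inferInstanceAs (FirstCountableTopology (Fin n → Fin n → ℝ))
  obtain ⟨L, hLmem, φ, hφ, hconv⟩ := hcpt.tendsto_subseq hDmem
  -- L is in the Lie algebra of K
  have hLK : L ∈ lieAlgOf n K := by
    intro t
    set m : ℕ → ℤ := fun k => ⌊t / ‖C (φ k)‖⌋ with hm
    have hw : ∀ k, ((u (φ k)) ^ (m k) : (Mat n)ˣ) ∈ K := fun k => zpow_mem (huK (φ k)) _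
    have hwv : ∀ k, (((u (φ k)) ^ (m k) : (Mat n)ˣ) : Mat n)
        = exp (((m k : ℝ) * ‖C (φ k)‖) • D (φ k)) := by
      intro k
      rw [val_zpow_of_exp _ _ (hue (φ k))]
      congr 1
      rw [hD, smul_smul, mul_assoc, mul_inv_cancel₀ (hCnorm (φ k)).ne', mul_one]
    -- the scalars converge to t
    have hsc : Tendsto (fun k => (m k : ℝ) * ‖C (φ k)‖) atTop (𝓝 t) := by
      have hub : ∀ k, (m k : ℝ) * ‖C (φ k)‖ ≤ t := by
        intro k
        have := Int.floor_le (t / ‖C (φ k)‖)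
        calc (m k : ℝ) * ‖C (φ k)‖ ≤ (t / ‖C (φ k)‖) * ‖C (φ k)‖ :=
              mul_le_mul_of_nonneg_right this (hCnorm _).le
          _ = t := div_mul_cancel₀ _ (hCnorm _).ne'
      have hlb : ∀ k, t - 1/(φ k + 1) ≤ (m k : ℝ) * ‖C (φ k)‖ := by
        intro k
        have h1 : t / ‖C (φ k)‖ < (m k : ℝ) + 1 := Int.lt_floor_add_one _
        have h2 : t < ((m k : ℝ) + 1) * ‖C (φ k)‖ := by
          have := mul_lt_mul_of_pos_right h1 (hCnorm (φ k))
          rwa [div_mul_cancel₀ _ (hCnorm (φ k)).ne'] at this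
        have h3 : t - ‖C (φ k)‖ < (m k : ℝ) * ‖C (φ k)‖ := by nlinarith
        have h4 : ‖C (φ k)‖ ≤ 1/(φ k + 1) := (hClt (φ k)).le
        linarith
      have hto : Tendsto (fun k : ℕ => t - 1/(φ k + 1 : ℝ)) atTop (𝓝 t) := by
        have : Tendsto (fun k : ℕ => 1/(φ k + 1 : ℝ)) atTop (𝓝 0) := by
          apply tendsto_one_div_add_atTop_nhds_zero_nat.comp
            (hφ.tendsto_atTop.congr ?_ |>.comp ?_)
          · intro; rfl
          · exact tendsto_id
        simpa using tendsto_const_nhds.sub this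
      exact tendsto_of_tendsto_of_tendsto_of_le_of_le hto tendsto_const_nhds hlb hub
    have hDto : Tendsto (fun k => D (φ k)) atTop (𝓝 L) := hconv
    have hsmul : Tendsto (fun k => ((m k : ℝ) * ‖C (φ k)‖) • D (φ k)) atTop (𝓝 (t • L)) :=
      hsc.smul hDto
    have hexp : Tendsto (fun k => (((u (φ k)) ^ (m k) : (Mat n)ˣ) : Mat n)) atTop
        (𝓝 (exp (t • L))) := by
      have heq : (fun k => (((u (φ k)) ^ (m k) : (Mat n)ˣ) : Mat n))
          = fun k => exp (((m k : ℝ) * ‖C (φ k)‖) • D (φ k)) := funext hwv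
      rw [heq]
      exact (NormedSpace.exp_continuous.tendsto _).comp hsmul
    have hclosed : IsClosed (Units.val '' (K : Set (Mat n)ˣ)) :=
      (hKcompact.image Units.continuous_val).isClosed
    have hmem : exp (t • L) ∈ Units.val '' (K : Set (Mat n)ˣ) :=
      hclosed.mem_of_tendsto hexp (Eventually.of_forall fun k => ⟨_, hw k, rfl⟩)
    obtain ⟨u', hu'K, hu'v⟩ := hmem
    exact ⟨u', hu'K, hu'v⟩
  -- contradiction
  obtain ⟨Y, hY, Z, hZ, hYZ⟩ := hsum L hLK
  have hLsup : L ∈ Submodule.span ℝ (lieAlgOf n G) ⊔ Submodule.span ℝ (lieAlgOf n H) := by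
    rw [Submodule.mem_sup]
    exact ⟨Y, Submodule.subset_span hY, Z, Submodule.subset_span hZ, hYZ.symm⟩
  have hLS : L ∈ S := hLmem.2
  have : L = 0 := by
    have := hS.le_bot (Submodule.mem_inf.2 ⟨hLS, hLsup⟩)
    simpa using this
  have hL1 : ‖L‖ = 1 := by simpa [mem_sphere_zero_iff_norm] using hLmem.1
  rw [this] at hL1
  simp at hL1

/-- ordered product of exponentials along a list -/
noncomputable def expProd (l : List (Mat n)) (v : Fin l.length → ℝ) : Mat n :=
  (List.ofFn fun i => exp (v i • l.get i)).prod

theorem expProd_zero (l : List (Mat n)) : expProd l 0 = 1 := by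
  induction l with
  | nil => simp [expProd]
  | cons a l ih =>
    rw [expProd, List.ofFn_succ]
    simp [NormedSpace.exp_zero]

theorem expProd_mem (Q : Subgroup (Mat n)ˣ) (l : List (Mat n))
    (hl : ∀ x ∈ l, x ∈ lieAlgOf n Q) (v : Fin l.length → ℝ) :
    ∃ u ∈ Q, (u : Mat n) = expProd l v := by
  induction l with
  | nil => exact ⟨1, one_mem Q, by simp [expProd]⟩
  | cons a l ih =>
    obtain ⟨u₁, hu₁, he₁⟩ := hl a List.mem_cons_self (v (0 : Fin (l.length + 1)))
    obtain ⟨u₂, hu₂, he₂⟩ := ih (fun x hx => hl x (List.mem_cons_of_mem a hx)) (Fin.tail v)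
    refine ⟨u₁ * u₂, mul_mem hu₁ hu₂, ?_⟩
    rw [expProd, List.ofFn_succ, List.prod_cons, Units.val_mul, he₁, he₂]
    rfl

theorem expProd_hasStrictFDerivAt (l : List (Mat n)) :
    ∃ D : (Fin l.length → ℝ) →L[ℝ] Mat n, HasStrictFDerivAt (expProd l) D 0 ∧
      ∀ v, D v = ∑ i, v i • l.get i := by
  induction l with
  | nil =>
    refine ⟨0, ?_, by simp⟩
    have : expProd (n := n) [] = fun _ => 1 := by
      funext v; simp [expProd]
    rw [this]
    exact hasStrictFDerivAt_const _ _
  | cons a l ih =>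
    obtain ⟨D₂, hD₂, hD₂v⟩ := ih
    set A : (Fin (l.length + 1) → ℝ) →L[ℝ] Mat n :=
      (ContinuousLinearMap.proj 0 : (Fin (l.length + 1) → ℝ) →L[ℝ] ℝ).smulRight a with hA
    set T : (Fin (l.length + 1) → ℝ) →L[ℝ] (Fin l.length → ℝ) :=
      ContinuousLinearMap.pi (fun i : Fin l.length =>
        (ContinuousLinearMap.proj i.succ : (Fin (l.length + 1) → ℝ) →L[ℝ] ℝ)) with hT
    have hf₁ : HasStrictFDerivAt (fun v : Fin (l.length + 1) → ℝ => exp (v 0 • a))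
        (((1 : Mat n →L[ℝ] Mat n)).comp A) 0 := by
      have hexp : HasStrictFDerivAt (exp) (1 : Mat n →L[ℝ] Mat n) (A 0) := by
        rw [map_zero]; exact hasStrictFDerivAt_exp_zero
      exact hexp.comp 0 A.hasStrictFDerivAt
    have hf₂ : HasStrictFDerivAt (fun v : Fin (l.length + 1) → ℝ => expProd l (Fin.tail v))
        (D₂.comp T) 0 := by
      have h0 : T 0 = 0 := map_zero T
      have : HasStrictFDerivAt (expProd l) D₂ (T 0) := by rw [h0]; exact hD₂
      exact this.comp 0 T.hasStrictFDerivAt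
    have hmul := hf₁.mul' hf₂
    have hfun : expProd (a :: l)
        = (fun y : Fin (l.length + 1) → ℝ => exp (y 0 • a) * expProd l (Fin.tail y)) := by
      funext v
      rw [expProd, List.ofFn_succ, List.prod_cons]
      rfl
    refine ⟨exp ((0 : Fin (l.length + 1) → ℝ) 0 • a) • D₂.comp T
      + ((1 : Mat n →L[ℝ] Mat n).comp A).smulRight
          (expProd l (Fin.tail (0 : Fin (l.length + 1) → ℝ))), ?_, ?_⟩
    · rw [hfun]; exact hmul
    · intro v
      have h1 : exp ((0 : Fin (l.length+1) → ℝ) 0 • a) = 1 := by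
        simp [NormedSpace.exp_zero]
      have h2 : expProd l (Fin.tail (0 : Fin (l.length+1) → ℝ)) = 1 := by
        have ht : Fin.tail (0 : Fin (l.length+1) → ℝ) = 0 := rfl
        rw [ht, expProd_zero]
      show (exp ((0 : Fin (l.length + 1) → ℝ) 0 • a) • D₂.comp T
        + ((1 : Mat n →L[ℝ] Mat n).comp A).smulRight
          (expProd l (Fin.tail (0 : Fin (l.length + 1) → ℝ)))) v
        = ∑ i : Fin (l.length + 1), v i • (a :: l).get i
      rw [h1, h2, Fin.sum_univ_succ]
      simp only [ContinuousLinearMap.add_apply, ContinuousLinearMap.coe_smul', Pi.smul_apply,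
        ContinuousLinearMap.smulRight_apply, ContinuousLinearMap.comp_apply,
        ContinuousLinearMap.one_apply, one_smul, smul_eq_mul, mul_one]
      rw [hD₂v]
      simp only [hA, hT, ContinuousLinearMap.smulRight_apply, ContinuousLinearMap.proj_apply,
        ContinuousLinearMap.pi_apply]
      rw [add_comm]
      rfl


/-- `G H` fills a neighborhood of 1 in `K`. -/
theorem local_surj (K G H : Subgroup (Mat n)ˣ) (hKcompact : IsCompact (K : Set (Mat n)ˣ))
    (hGK : G ≤ K) (hHK : H ≤ K)
    (hsum : ∀ X ∈ lieAlgOf n K, ∃ Y ∈ lieAlgOf n G, ∃ Z ∈ lieAlgOf n H, X = Y + Z) :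
    ∃ U ∈ 𝓝 (1 : (Mat n)ˣ), ∀ k ∈ K, k ∈ U → ∃ g ∈ G, ∃ h ∈ H, k = g * h := by
  classical
  -- finite spanning lists of the Lie algebras
  obtain ⟨sG, hsGsub, hsGspan, hsGind⟩ := exists_linearIndependent ℝ (lieAlgOf n G)
  obtain ⟨sH, hsHsub, hsHspan, hsHind⟩ := exists_linearIndependent ℝ (lieAlgOf n H)
  have hGfin : sG.Finite := hsGind.setFinite
  have hHfin : sH.Finite := hsHind.setFinite
  set lG : List (Mat n) := hGfin.toFinset.toList with hlGdef
  set lH : List (Mat n) := hHfin.toFinset.toList with hlHdef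
  have hlG : ∀ x ∈ lG, x ∈ lieAlgOf n G := fun x hx =>
    hsGsub (hGfin.mem_toFinset.1 (Finset.mem_toList.1 hx))
  have hlH : ∀ x ∈ lH, x ∈ lieAlgOf n H := fun x hx =>
    hsHsub (hHfin.mem_toFinset.1 (Finset.mem_toList.1 hx))
  have hrangeG : Set.range lG.get = sG := by
    ext x
    constructor
    · rintro ⟨i, rfl⟩
      exact hGfin.mem_toFinset.1 (Finset.mem_toList.1 (lG.get_mem i))
    · intro hx
      obtain ⟨i, hi⟩ := List.mem_iff_get.1 (Finset.mem_toList.2 (hGfin.mem_toFinset.2 hx))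
      exact ⟨i, hi⟩
  have hrangeH : Set.range lH.get = sH := by
    ext x
    constructor
    · rintro ⟨i, rfl⟩
      exact hHfin.mem_toFinset.1 (Finset.mem_toList.1 (lH.get_mem i))
    · intro hx
      obtain ⟨i, hi⟩ := List.mem_iff_get.1 (Finset.mem_toList.2 (hHfin.mem_toFinset.2 hx))
      exact ⟨i, hi⟩
  -- complement
  obtain ⟨S, hScompl⟩ :=
    Submodule.exists_isCompl (Submodule.span ℝ (lieAlgOf n G) ⊔ Submodule.span ℝ (lieAlgOf n H))
  obtain ⟨ε, hε, hcrux⟩ := crux K G H hKcompact hsum S hScompl.symm.disjoint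
  -- the map Ψ
  set E := ((Fin lG.length → ℝ) × (Fin lH.length → ℝ) × S) with hE
  set Ψ : E → Mat n :=
    fun x => expProd lG x.1 * expProd lH x.2.1 * exp (x.2.2 : Mat n) with hΨ
  obtain ⟨D₁, hD₁, hD₁v⟩ := expProd_hasStrictFDerivAt lG
  obtain ⟨D₂, hD₂, hD₂v⟩ := expProd_hasStrictFDerivAt lH
  set p₁ : E →L[ℝ] (Fin lG.length → ℝ) := ContinuousLinearMap.fst ℝ _ _ with hp₁
  set p₂ : E →L[ℝ] (Fin lH.length → ℝ) :=
    (ContinuousLinearMap.fst ℝ _ _).comp (ContinuousLinearMap.snd ℝ _ _) with hp₂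
  set p₃ : E →L[ℝ] Mat n :=
    S.subtypeL.comp ((ContinuousLinearMap.snd ℝ _ _).comp (ContinuousLinearMap.snd ℝ _ _)) with hp₃
  have hf₁ : HasStrictFDerivAt (fun x : E => expProd lG x.1) (D₁.comp p₁) 0 := by
    have h : HasStrictFDerivAt (expProd lG) D₁ (p₁ 0) := by rw [map_zero]; exact hD₁
    exact h.comp 0 p₁.hasStrictFDerivAt
  have hf₂ : HasStrictFDerivAt (fun x : E => expProd lH x.2.1) (D₂.comp p₂) 0 := by
    have h : HasStrictFDerivAt (expProd lH) D₂ (p₂ 0) := by rw [map_zero]; exact hD₂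
    exact h.comp 0 p₂.hasStrictFDerivAt
  have hf₃ : HasStrictFDerivAt (fun x : E => exp (x.2.2 : Mat n))
      ((1 : Mat n →L[ℝ] Mat n).comp p₃) 0 := by
    have h : HasStrictFDerivAt (exp) (1 : Mat n →L[ℝ] Mat n) (p₃ 0) := by
      rw [map_zero]; exact hasStrictFDerivAt_exp_zero
    exact h.comp 0 p₃.hasStrictFDerivAt
  have hmul := (hf₁.mul' hf₂).mul' hf₃
  set Dtot := ((fun x : E => expProd lG x.1) 0 * (fun x : E => expProd lH x.2.1) 0) •
      ((1 : Mat n →L[ℝ] Mat n).comp p₃) +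
      ((fun x : E => expProd lG x.1) 0 • D₂.comp p₂ +
        (D₁.comp p₁).smulRight ((fun x : E => expProd lH x.2.1) 0)).smulRight
        ((fun x : E => exp (x.2.2 : Mat n)) 0) with hDtot
  have hΨderiv : HasStrictFDerivAt Ψ Dtot 0 := hmul
  have hone : (fun x : E => expProd lG x.1) 0 = 1 := expProd_zero lG
  have hone' : (fun x : E => expProd lH x.2.1) 0 = 1 := expProd_zero lH
  have hone'' : (fun x : E => exp (x.2.2 : Mat n)) 0 = 1 := by
    show exp ((0 : S) : Mat n) = 1
    rw [Submodule.coe_zero, NormedSpace.exp_zero]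
  have hval : ∀ x : E, Dtot x =
      (∑ i, x.1 i • lG.get i) + (∑ j, x.2.1 j • lH.get j) + (x.2.2 : Mat n) := by
    intro x
    rw [hDtot]
    simp only [hone, hone', hone'', one_mul, one_smul,
      ContinuousLinearMap.add_apply, ContinuousLinearMap.coe_smul', Pi.smul_apply,
      ContinuousLinearMap.smulRight_apply, ContinuousLinearMap.comp_apply,
      ContinuousLinearMap.one_apply, smul_eq_mul, mul_one]
    rw [hD₁v, hD₂v]
    have h1 : p₁ x = x.1 := rfl
    have h2 : p₂ x = x.2.1 := rfl
    have h3 : p₃ x = (x.2.2 : Mat n) := rfl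
    rw [h1, h2, h3]
    abel
  -- surjectivity of the derivative
  have hsurj : LinearMap.range (Dtot : E →ₗ[ℝ] Mat n) = ⊤ := by
    rw [LinearMap.range_eq_top]
    intro m
    have hm : m ∈ (Submodule.span ℝ (lieAlgOf n G) ⊔ Submodule.span ℝ (lieAlgOf n H)) ⊔ S := by
      rw [hScompl.sup_eq_top]; trivial
    obtain ⟨q, hq, s, hsS, hqs⟩ := Submodule.mem_sup.1 hm
    obtain ⟨y, hy, z, hz, hyz⟩ := Submodule.mem_sup.1 hq
    have hyG : y ∈ Submodule.span ℝ (Set.range lG.get) := by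
      rw [hrangeG, hsGspan]; exact hy
    have hzH : z ∈ Submodule.span ℝ (Set.range lH.get) := by
      rw [hrangeH, hsHspan]; exact hz
    rw [← Fintype.range_linearCombination (R := ℝ) lG.get] at hyG
    rw [← Fintype.range_linearCombination (R := ℝ) lH.get] at hzH
    obtain ⟨vG, hvG⟩ := hyG
    obtain ⟨vH, hvH⟩ := hzH
    refine ⟨(vG, vH, ⟨s, hsS⟩), ?_⟩
    show Dtot (vG, vH, ⟨s, hsS⟩) = m
    rw [hval]
    rw [Fintype.linearCombination_apply] at hvG hvH
    show (∑ i, vG i • lG.get i) + (∑ j, vH j • lH.get j) + s = m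
    rw [hvG, hvH, hyz, hqs]
  have hmap : Filter.map Ψ (𝓝 0) = 𝓝 (Ψ 0) := hΨderiv.map_nhds_eq_of_surj hsurj
  have hΨ0 : Ψ 0 = 1 := by
    rw [hΨ]
    show expProd lG 0 * expProd lH 0 * exp ((0 : S) : Mat n) = 1
    rw [expProd_zero, expProd_zero, Submodule.coe_zero, NormedSpace.exp_zero, one_mul, mul_one]
  -- the neighborhood
  set U' : Set E := {x | ‖(x.2.2 : Mat n)‖ < ε} with hU'def
  have hU' : U' ∈ 𝓝 (0 : E) := by
    have hcont : Continuous fun x : E => ‖(x.2.2 : Mat n)‖ :=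
      (continuous_subtype_val.comp (continuous_snd.comp continuous_snd)).norm
    have hopen : IsOpen U' := isOpen_lt hcont continuous_const
    refine hopen.mem_nhds ?_
    show ‖((0 : S) : Mat n)‖ < ε
    rw [Submodule.coe_zero, norm_zero]
    exact hε
  have himg : Ψ '' U' ∈ 𝓝 (1 : Mat n) := by
    rw [← hΨ0, ← hmap]
    exact Filter.image_mem_map hU'
  refine ⟨Units.val ⁻¹' (Ψ '' U'), ?_, ?_⟩
  · have := Units.continuous_val (M := Mat n)
    exact this.continuousAt.preimage_mem_nhds (by rw [Units.val_one]; exact himg)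
  · intro k hkK hkU
    obtain ⟨x, hxU', hxΨ⟩ := hkU
    obtain ⟨g, hgG, hgv⟩ := expProd_mem G lG hlG x.1
    obtain ⟨h, hhH, hhv⟩ := expProd_mem H lH hlH x.2.1
    have hk : (k : Mat n) = ((g * h : (Mat n)ˣ) : Mat n) * exp (x.2.2 : Mat n) := by
      rw [Units.val_mul, hgv, hhv]
      rw [hΨ] at hxΨ
      exact hxΨ.symm
    have hexpC : ((((g * h)⁻¹ * k : (Mat n)ˣ)) : Mat n) = exp (x.2.2 : Mat n) := by
      rw [Units.val_mul, hk, ← mul_assoc, Units.inv_mul, one_mul]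
    have hC0 : ((x.2.2 : Mat n)) = 0 :=
      hcrux _ (SetLike.coe_mem _) hxU'
        ⟨(g * h)⁻¹ * k, mul_mem (inv_mem (mul_mem (hGK hgG) (hHK hhH))) hkK, hexpC⟩
    refine ⟨g, hgG, h, hhH, Units.ext ?_⟩
    rw [hk, hC0, NormedSpace.exp_zero, mul_one]

end Normed

/-- Every element of `K` is a product `g * h`. -/
theorem mul_cover (K G H : Subgroup (Mat n)ˣ) (hKcompact : IsCompact (K : Set (Mat n)ˣ))
    (hKconn : IsConnected (K : Set (Mat n)ˣ)) (hGK : G ≤ K) (hHK : H ≤ K)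
    (hGclosed : IsClosed (G : Set (Mat n)ˣ)) (hHclosed : IsClosed (H : Set (Mat n)ˣ))
    (hsum : ∀ X ∈ lieAlgOf n K, ∃ Y ∈ lieAlgOf n G, ∃ Z ∈ lieAlgOf n H, X = Y + Z) :
    ∀ x ∈ K, ∃ g ∈ G, ∃ h ∈ H, x = g * h := by
  obtain ⟨U, hU, hUprop⟩ := local_surj K G H hKcompact hGK hHK hsum
  set T : Set (Mat n)ˣ := (fun p : (Mat n)ˣ × (Mat n)ˣ => p.1 * p.2) ''
    ((G : Set (Mat n)ˣ) ×ˢ (H : Set (Mat n)ˣ)) with hT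
  have hTmem : ∀ x, x ∈ T ↔ ∃ g ∈ G, ∃ h ∈ H, x = g * h := by
    intro x
    constructor
    · rintro ⟨⟨g, h⟩, ⟨hg, hh⟩, rfl⟩
      exact ⟨g, hg, h, hh, rfl⟩
    · rintro ⟨g, hg, h, hh, rfl⟩
      exact ⟨⟨g, h⟩, ⟨hg, hh⟩, rfl⟩
  have hTK : T ⊆ (K : Set (Mat n)ˣ) := by
    rintro _ ⟨⟨g, h⟩, ⟨hg, hh⟩, rfl⟩
    exact mul_mem (hGK hg) (hHK hh)
  have hGcpt : IsCompact (G : Set (Mat n)ˣ) :=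
    hKcompact.of_isClosed_subset hGclosed hGK
  have hHcpt : IsCompact (H : Set (Mat n)ˣ) :=
    hKcompact.of_isClosed_subset hHclosed hHK
  have hTcpt : IsCompact T := (hGcpt.prod hHcpt).image continuous_mul
  have hTclosed : IsClosed T := hTcpt.isClosed
  -- T is open within K
  have hopenT : ∀ k₀ ∈ T, ∃ V : Set (Mat n)ˣ, IsOpen V ∧ k₀ ∈ V ∧
      (K : Set (Mat n)ˣ) ∩ V ⊆ T := by
    rintro _ ⟨⟨g₀, h₀⟩, ⟨hg₀, hh₀⟩, rfl⟩
    obtain ⟨O, hOU, hOopen, hO1⟩ := mem_nhds_iff.1 hU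
    set c : (Mat n)ˣ → (Mat n)ˣ := fun x => g₀⁻¹ * x * h₀⁻¹ with hc
    have hccont : Continuous c := by
      have : c = (fun x => x * h₀⁻¹) ∘ (fun x => g₀⁻¹ * x) := rfl
      rw [this]
      exact (continuous_mul_right _).comp (continuous_mul_left _)
    refine ⟨c ⁻¹' O, hOopen.preimage hccont, ?_, ?_⟩
    · show c (g₀ * h₀) ∈ O
      have : c (g₀ * h₀) = 1 := by
        rw [hc]; group
      rw [this]; exact hO1
    · rintro k ⟨hkK, hkV⟩
      have hckK : c k ∈ K := mul_mem (mul_mem (inv_mem (hGK hg₀)) hkK) (inv_mem (hHK hh₀))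
      obtain ⟨g, hg, h, hh, hgh⟩ := hUprop (c k) hckK (hOU hkV)
      have hk : k = (g₀ * g) * (h * h₀) := by
        have : k = g₀ * c k * h₀ := by rw [hc]; group
        rw [this, hgh]; group
      rw [hTmem]
      exact ⟨g₀ * g, mul_mem hg₀ hg, h * h₀, mul_mem hh hh₀, hk⟩
  -- the union of the witnessing open sets
  set u : Set (Mat n)ˣ := {x | ∃ V : Set (Mat n)ˣ, IsOpen V ∧ x ∈ V ∧
      (K : Set (Mat n)ˣ) ∩ V ⊆ T} with hu
  have huopen : IsOpen u := by
    rw [isOpen_iff_forall_mem_open]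
    rintro x ⟨V, hVopen, hxV, hVT⟩
    exact ⟨V, fun y hy => ⟨V, hVopen, hy, hVT⟩, hVopen, hxV⟩
  have hTu : T ⊆ u := by
    intro x hx
    obtain ⟨V, h1, h2, h3⟩ := hopenT x hx
    exact ⟨V, h1, h2, h3⟩
  have hKuT : (K : Set (Mat n)ˣ) ∩ u ⊆ T := by
    rintro x ⟨hxK, V, hVopen, hxV, hVT⟩
    exact hVT ⟨hxK, hxV⟩
  -- connectivity argument
  have hKT : (K : Set (Mat n)ˣ) ⊆ T := by
    by_contra hcon
    obtain ⟨x₀, hx₀K, hx₀T⟩ : ∃ x₀ ∈ (K : Set (Mat n)ˣ), x₀ ∉ T := by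
      simpa [Set.subset_def] using hcon
    have hpre := hKconn.isPreconnected u Tᶜ huopen hTclosed.isOpen_compl
      (fun x hxK => by
        by_cases hxT : x ∈ T
        · exact Or.inl (hTu hxT)
        · exact Or.inr hxT)
      ⟨1, one_mem K, hTu ((hTmem 1).2 ⟨1, one_mem G, 1, one_mem H, by simp⟩)⟩
      ⟨x₀, hx₀K, hx₀T⟩
    obtain ⟨y, hyK, hyu, hyTc⟩ := hpre
    exact hyTc (hKuT ⟨hyK, hyu⟩)
  intro x hx
  exact (hTmem x).1 (hKT hx)

end Stmt18


open Stmt18 in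
/-- Let `K` be a compact connected (matrix) Lie group with closed connected subgroups
`G` and `H` such that `𝔤 + 𝔥 = 𝔨` on Lie algebras.  Then `Ad(k) 𝔤 + 𝔥 = 𝔨` for all
`k ∈ K`. -/
theorem stmt_18 (n : ℕ) (K G H : Subgroup (Matrix (Fin n) (Fin n) ℝ)ˣ)
    (hKcompact : IsCompact (K : Set (Matrix (Fin n) (Fin n) ℝ)ˣ))
    (hKconn : IsConnected (K : Set (Matrix (Fin n) (Fin n) ℝ)ˣ))
    (hGK : G ≤ K) (hHK : H ≤ K)
    (hGclosed : IsClosed (G : Set (Matrix (Fin n) (Fin n) ℝ)ˣ))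
    (hGconn : IsConnected (G : Set (Matrix (Fin n) (Fin n) ℝ)ˣ))
    (hHclosed : IsClosed (H : Set (Matrix (Fin n) (Fin n) ℝ)ˣ))
    (hHconn : IsConnected (H : Set (Matrix (Fin n) (Fin n) ℝ)ˣ))
    (hsum : ∀ X ∈ lieAlgOf n K, ∃ Y ∈ lieAlgOf n G, ∃ Z ∈ lieAlgOf n H, X = Y + Z) :
    ∀ k : (Matrix (Fin n) (Fin n) ℝ)ˣ, k ∈ K →
      ∀ X ∈ lieAlgOf n K, ∃ Y ∈ lieAlgOf n G, ∃ Z ∈ lieAlgOf n H,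
        X = (k : Matrix (Fin n) (Fin n) ℝ) * Y * ((k⁻¹ : (Matrix (Fin n) (Fin n) ℝ)ˣ) :
          Matrix (Fin n) (Fin n) ℝ) + Z := by
  intro k hkK X hX
  obtain ⟨g, hg, h, hh, hk⟩ := mul_cover K G H hKcompact hKconn hGK hHK hGclosed hHclosed hsum
    k⁻¹ (inv_mem hkK)
  have hX' := conj_mem_lieAlgOf (hHK hh) hX
  obtain ⟨Y', hY', Z', hZ', hXYZ⟩ := hsum _ hX'
  refine ⟨_, conj_mem_lieAlgOf hg hY', _, conj_mem_lieAlgOf (inv_mem hh) hZ', ?_⟩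
  have hkv : (k : Matrix (Fin n) (Fin n) ℝ)
      = ((h⁻¹ : (Matrix (Fin n) (Fin n) ℝ)ˣ) : Matrix (Fin n) (Fin n) ℝ)
        * ((g⁻¹ : (Matrix (Fin n) (Fin n) ℝ)ˣ) : Matrix (Fin n) (Fin n) ℝ) := by
    have hkk : k = h⁻¹ * g⁻¹ := by rw [← mul_inv_rev, ← hk, inv_inv]
    rw [hkk, Units.val_mul]
  have hkiv : ((k⁻¹ : (Matrix (Fin n) (Fin n) ℝ)ˣ) : Matrix (Fin n) (Fin n) ℝ)
      = (g : Matrix (Fin n) (Fin n) ℝ) * (h : Matrix (Fin n) (Fin n) ℝ) := by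
    rw [hk, Units.val_mul]
  rw [hkv, hkiv, inv_inv]
  have hXr : X = ((h⁻¹ : (Matrix (Fin n) (Fin n) ℝ)ˣ) : Matrix (Fin n) (Fin n) ℝ)
      * (Y' + Z') * (h : Matrix (Fin n) (Fin n) ℝ) := by
    rw [← hXYZ]
    simp only [← mul_assoc]
    rw [Units.inv_mul, one_mul, mul_assoc, Units.inv_mul, mul_one]
  rw [hXr]
  simp only [mul_add, add_mul, ← mul_assoc, Units.inv_mul_cancel_right,
    Units.mul_inv_cancel_right]
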